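/- Let V have basis {ψ_m : m ∈ ℤ} with operators Â ψ_m = m ψ_m, Ĉ₊ ψ_m = (m + 1/2) ψ_{m+1}, Ĉ₋ ψ_m = (m − 1/2) ψ_{m−1}. Then an inner product on V making Â self-adjoint and Ĉ₊† = Ĉ₋ exists, is unique up to an overall positive scale, and in it {ψ_m} is orthogonal with all norms equal. -/

import Mathlib

open scoped BigOperators

/-- The operator Â on V = span{ψ_m : m ∈ ℤ} (realised as ℤ →₀ ℂ),
Â ψ_m = m ψ_m. -/
noncomputable def Aop : (ℤ →₀ ℂ) →ₗ[ℂ] (ℤ →₀ ℂ) :=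
  Finsupp.lsum ℂ fun m : ℤ => (m : ℂ) • Finsupp.lsingle m

/-- Ĉ₊ ψ_m = (m + 1/2) ψ_{m+1}. -/
noncomputable def Cp : (ℤ →₀ ℂ) →ₗ[ℂ] (ℤ →₀ ℂ) :=
  Finsupp.lsum ℂ fun m : ℤ => ((m : ℂ) + 1/2) • Finsupp.lsingle (m + 1)

/-- Ĉ₋ ψ_m = (m − 1/2) ψ_{m−1}. -/
noncomputable def Cm : (ℤ →₀ ℂ) →ₗ[ℂ] (ℤ →₀ ℂ) :=
  Finsupp.lsum ℂ fun m : ℤ => ((m : ℂ) - 1/2) • Finsupp.lsingle (m - 1)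

/-- Basis vector ψ_m. -/
noncomputable def ψ (m : ℤ) : ℤ →₀ ℂ := Finsupp.single m 1

/-- B is a (positive definite Hermitian sesquilinear) inner product on V. -/
def IsInnerProduct (B : (ℤ →₀ ℂ) → (ℤ →₀ ℂ) → ℂ) : Prop :=
  (∀ x y z, B (x + y) z = B x z + B y z) ∧
  (∀ x y z, B x (y + z) = B x y + B x z) ∧
  (∀ (c : ℂ) x y, B (c • x) y = (starRingEnd ℂ) c * B x y) ∧
  (∀ (c : ℂ) x y, B x (c • y) = c * B x y) ∧
  (∀ x y, B x y = (starRingEnd ℂ) (B y x)) ∧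
  (∀ x, x ≠ 0 → 0 < (B x x).re)

lemma Aop_ψ (m : ℤ) : Aop (ψ m) = (m : ℂ) • ψ m := by
  simp only [Aop, ψ, Finsupp.lsum_single, LinearMap.smul_apply, Finsupp.lsingle_apply]

lemma Cp_ψ (m : ℤ) : Cp (ψ m) = ((m : ℂ) + 1/2) • ψ (m + 1) := by
  simp only [Cp, ψ, Finsupp.lsum_single, LinearMap.smul_apply, Finsupp.lsingle_apply]

lemma Cm_ψ (m : ℤ) : Cm (ψ m) = ((m : ℂ) - 1/2) • ψ (m - 1) := by
  simp only [Cm, ψ, Finsupp.lsum_single, LinearMap.smul_apply, Finsupp.lsingle_apply]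

lemma conj_int (m : ℤ) : (starRingEnd ℂ) ((m : ℂ)) = (m : ℂ) := map_intCast _ m

lemma conj_int_add_half (m : ℤ) :
    (starRingEnd ℂ) ((m : ℂ) + 1/2) = (m : ℂ) + 1/2 := by
  rw [map_add, map_div₀, map_one, conj_int, map_ofNat]

lemma int_add_half_ne (m : ℤ) : ((m : ℂ) + 1/2) ≠ 0 := by
  have h : ((2 * m + 1 : ℤ) : ℂ) ≠ 0 := Int.cast_ne_zero.mpr (by omega)
  intro h0
  apply h
  push_cast
  linear_combination 2 * h0

/-- The standard inner product on ℤ →₀ ℂ. -/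
noncomputable def Bstd (x y : ℤ →₀ ℂ) : ℂ := x.sum fun m a => (starRingEnd ℂ) a * y m

lemma Bstd_eq_sum (x y : ℤ →₀ ℂ) (s : Finset ℤ) (hs : x.support ⊆ s) :
    Bstd x y = ∑ m ∈ s, (starRingEnd ℂ) (x m) * y m := by
  exact Finsupp.sum_of_support_subset x hs _ (by intro i _; simp)

lemma Bstd_zero_left (y : ℤ →₀ ℂ) : Bstd 0 y = 0 := by simp [Bstd]

lemma Bstd_add_left (x y z : ℤ →₀ ℂ) : Bstd (x + y) z = Bstd x z + Bstd y z := by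
  classical
  unfold Bstd
  exact Finsupp.sum_add_index' (by intro i; simp) (by intro i b₁ b₂; simp [map_add, add_mul])

lemma Bstd_add_right (x y z : ℤ →₀ ℂ) : Bstd x (y + z) = Bstd x y + Bstd x z := by
  unfold Bstd
  rw [← Finsupp.sum_add]
  congr 1
  ext m a
  simp [mul_add]

lemma Bstd_smul_left (c : ℂ) (x y : ℤ →₀ ℂ) :
    Bstd (c • x) y = (starRingEnd ℂ) c * Bstd x y := by
  unfold Bstd
  rw [Finsupp.sum_smul_index (by intro i; simp), Finsupp.mul_sum]
  congr 1
  ext m a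
  simp [map_mul]
  ring

lemma Bstd_smul_right (c : ℂ) (x y : ℤ →₀ ℂ) : Bstd x (c • y) = c * Bstd x y := by
  unfold Bstd
  rw [Finsupp.mul_sum]
  congr 1
  ext m a
  simp [Finsupp.smul_apply]
  ring

lemma Bstd_conj (x y : ℤ →₀ ℂ) : Bstd x y = (starRingEnd ℂ) (Bstd y x) := by
  classical
  rw [Bstd_eq_sum x y (x.support ∪ y.support) Finset.subset_union_left,
      Bstd_eq_sum y x (x.support ∪ y.support) Finset.subset_union_right,
      map_sum]
  refine Finset.sum_congr rfl fun m _ => ?_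
  simp [map_mul]
  ring

lemma Bstd_pos (x : ℤ →₀ ℂ) (hx : x ≠ 0) : 0 < (Bstd x x).re := by
  classical
  rw [Bstd_eq_sum x x x.support subset_rfl, Complex.re_sum]
  obtain ⟨m, hm⟩ := Finsupp.support_nonempty_iff.mpr hx
  refine Finset.sum_pos' (fun i _ => ?_) ⟨m, hm, ?_⟩
  · rw [mul_comm, Complex.mul_conj]
    exact Complex.normSq_nonneg _
  · rw [mul_comm, Complex.mul_conj]
    simpa [Complex.normSq_pos] using Finsupp.mem_support_iff.mp hm

lemma Bstd_ψ (m n : ℤ) : Bstd (ψ m) (ψ n) = if m = n then 1 else 0 := by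
  classical
  unfold Bstd ψ
  rw [Finsupp.sum_single_index (by simp)]
  simp [Finsupp.single_apply, eq_comm]

/-- Extend an adjoint relation from basis vectors to all of V. -/
lemma adjoint_ext (B : (ℤ →₀ ℂ) → (ℤ →₀ ℂ) → ℂ)
    (hadd₁ : ∀ x y z, B (x + y) z = B x z + B y z)
    (hadd₂ : ∀ x y z, B x (y + z) = B x y + B x z)
    (hsmul₁ : ∀ (c : ℂ) x y, B (c • x) y = (starRingEnd ℂ) c * B x y)
    (hsmul₂ : ∀ (c : ℂ) x y, B x (c • y) = c * B x y)
    (S T : (ℤ →₀ ℂ) →ₗ[ℂ] (ℤ →₀ ℂ))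
    (h : ∀ m n, B (S (ψ m)) (ψ n) = B (ψ m) (T (ψ n))) :
    ∀ x y, B (S x) y = B x (T y) := by
  have hz₁ : ∀ y, B 0 y = 0 := by
    intro y
    have := hsmul₁ 0 0 y
    simpa using this
  have hz₂ : ∀ x, B x 0 = 0 := by
    intro x
    have := hsmul₂ 0 x 0
    simpa using this
  have key : ∀ x n, B (S x) (ψ n) = B x (T (ψ n)) := by
    intro x n
    induction x using Finsupp.induction_linear with
    | zero => simp [hz₁]
    | add f g hf hg => rw [map_add, hadd₁, hadd₁, hf, hg]
    | single a b =>
        have hba : Finsupp.single a b = b • ψ a := by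
          rw [ψ, Finsupp.smul_single, smul_eq_mul, mul_one]
        rw [hba, map_smul, hsmul₁, hsmul₁, h]
  intro x y
  induction y using Finsupp.induction_linear with
  | zero => simp [hz₂]
  | add f g hf hg => rw [map_add, hadd₂, hadd₂, hf, hg]
  | single a b =>
      have hba : Finsupp.single a b = b • ψ a := by
        rw [ψ, Finsupp.smul_single, smul_eq_mul, mul_one]
      rw [hba, map_smul, hsmul₂, hsmul₂, key]

/-- There exists an inner product on V making Â self-adjoint and Ĉ₊† = Ĉ₋;
any such inner product makes {ψ_m} orthogonal with all norms equal, and is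
unique up to an overall positive scale. -/
theorem inner_product_exists_unique :
    (∃ B : (ℤ →₀ ℂ) → (ℤ →₀ ℂ) → ℂ, IsInnerProduct B ∧
      (∀ x y, B (Aop x) y = B x (Aop y)) ∧
      (∀ x y, B (Cp x) y = B x (Cm y))) ∧
    (∀ B : (ℤ →₀ ℂ) → (ℤ →₀ ℂ) → ℂ, IsInnerProduct B →
      (∀ x y, B (Aop x) y = B x (Aop y)) →
      (∀ x y, B (Cp x) y = B x (Cm y)) →
      ∃ c : ℝ, 0 < c ∧ ∀ m n : ℤ, B (ψ m) (ψ n) = if m = n then (c : ℂ) else 0) := by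
  constructor
  · refine ⟨Bstd, ⟨Bstd_add_left, Bstd_add_right, Bstd_smul_left, Bstd_smul_right,
      Bstd_conj, Bstd_pos⟩, ?_, ?_⟩
    · refine adjoint_ext Bstd Bstd_add_left Bstd_add_right Bstd_smul_left Bstd_smul_right
        Aop Aop (fun m n => ?_)
      rw [Aop_ψ, Aop_ψ, Bstd_smul_left, Bstd_smul_right, Bstd_ψ, conj_int]
      by_cases h : m = n
      · subst h; rfl
      · simp [h]
    · refine adjoint_ext Bstd Bstd_add_left Bstd_add_right Bstd_smul_left Bstd_smul_right
        Cp Cm (fun m n => ?_)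
      rw [Cp_ψ, Cm_ψ, Bstd_smul_left, Bstd_smul_right, Bstd_ψ, Bstd_ψ, conj_int_add_half]
      by_cases h : n = m + 1
      · subst h
        simp only [add_sub_cancel_right, if_pos rfl, mul_one]
        push_cast
        ring
      · rw [if_neg (by omega), if_neg (by omega)]
        ring
  · intro B hB hA hC
    obtain ⟨hadd₁, hadd₂, hsmul₁, hsmul₂, hconj, hpos⟩ := hB
    -- off-diagonal vanishing
    have off : ∀ m n : ℤ, m ≠ n → B (ψ m) (ψ n) = 0 := by
      intro m n hmn
      have h := hA (ψ m) (ψ n)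
      rw [Aop_ψ, Aop_ψ, hsmul₁, hsmul₂, conj_int] at h
      have hne : (m : ℂ) - (n : ℂ) ≠ 0 := by
        rw [sub_ne_zero]
        exact_mod_cast hmn
      have : ((m : ℂ) - n) * B (ψ m) (ψ n) = 0 := by linear_combination h
      exact (mul_eq_zero.mp this).resolve_left hne
    -- diagonal step
    have step : ∀ m : ℤ, B (ψ (m + 1)) (ψ (m + 1)) = B (ψ m) (ψ m) := by
      intro m
      have h := hC (ψ m) (ψ (m + 1))
      rw [Cp_ψ, Cm_ψ, hsmul₁, hsmul₂, conj_int_add_half] at h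
      have h2 : (((m + 1 : ℤ) : ℂ) - 1/2) = (m : ℂ) + 1/2 := by push_cast; ring
      rw [h2] at h
      have h3 : (ψ (m + 1 - 1)) = ψ m := by congr 1; omega
      rw [h3] at h
      exact mul_left_cancel₀ (int_add_half_ne m) h
    -- all diagonal entries equal
    have diag : ∀ m : ℤ, B (ψ m) (ψ m) = B (ψ 0) (ψ 0) := by
      intro m
      induction m using Int.induction_on with
      | zero => rfl
      | succ n ih => rw [step n]; exact ih
      | pred n ih => rw [← ih, ← step (-n - 1)]; norm_num
    -- B (ψ 0) (ψ 0) is real and positive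
    have hψ0 : ψ (0 : ℤ) ≠ 0 := by
      rw [ψ]
      intro h
      exact one_ne_zero (Finsupp.single_eq_zero.mp h)
    have hposd : 0 < (B (ψ 0) (ψ 0)).re := hpos _ hψ0
    have hreal : B (ψ 0) (ψ 0) = ((B (ψ 0) (ψ 0)).re : ℂ) := by
      have := hconj (ψ 0) (ψ 0)
      have him : (B (ψ 0) (ψ 0)).im = 0 := by
        have h2 := congrArg Complex.im this
        simp only [Complex.conj_im] at h2
        linarith
      exact Complex.ext rfl (by simp [him])
    refine ⟨(B (ψ 0) (ψ 0)).re, hposd, fun m n => ?_⟩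
    by_cases h : m = n
    · subst h
      rw [if_pos rfl, diag m]
      exact hreal
    · rw [if_neg h, off m n h]
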